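/- For the Gaussian moment problem (PG)₃ — minimize ∫_ℝ x(t) ln x(t) dt over measurable x ≥ 0 subject to ∫ x dt = b₁, ∫ t x dt = b₂, ∫ t² x dt = b₃ — with b₁, b₃ > 0 and |b₂| < √(b₁b₃), the unique optimal solution is x̄(t) = (b₁²/√(2π(b₁b₃ - b₂²))) · exp(-½ · b₁²(t - b₂/b₁)²/(b₁b₃ - b₂²)) and the optimal value is b₁ ln(b₁²/√(2πe(b₁b₃ - b₂²))). In particular, for b = (1, 0, σ²) with σ > 0, the solution is the Gaussian density (2πσ²)^{-1/2} e^{-t²/(2σ²)} with value -ln√(2πeσ²). -/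

import Mathlib

open MeasureTheory ENNReal Filter Set Topology

/-- Positive part of an extended real, in `ℝ≥0∞`. -/
noncomputable def epos (a : EReal) : ℝ≥0∞ := if a = ⊤ then ⊤ else ENNReal.ofReal a.toReal

/-- Extended integral `∫ f dμ := ∫ f₊ dμ - ∫ f₋ dμ` with the convention `∞ - ∞ := ∞`. -/
noncomputable def eintegral {T : Type*} [MeasurableSpace T] (μ : Measure T) (f : T → EReal) :
    EReal :=
  if (∫⁻ t, epos (f t) ∂μ) = ⊤ then ⊤
  else ((∫⁻ t, epos (f t) ∂μ : ℝ≥0∞) : EReal) - ((∫⁻ t, epos (- f t) ∂μ : ℝ≥0∞) : EReal)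


/-- The integral functional Phi(x) := extended integral of phi(x(.)) with respect to mu. -/
noncomputable def Phi {T : Type*} [MeasurableSpace T] (μ : Measure T) (φ : ℝ → EReal)
    (x : T → ℝ) : EReal := eintegral μ (fun t => φ (x t))

/-- The Boltzmann–Shannon entropy `φ(u) = u ln u` for `u ≥ 0` (with `0 ln 0 = 0`), `φ(u) = ∞`
for `u < 0`. -/
noncomputable def phiBS : ℝ → EReal :=
  fun u => if u < 0 then ⊤ else ((u * Real.log u : ℝ) : EReal)

lemma epos_coe (r : ℝ) : epos ((r : ℝ) : EReal) = ENNReal.ofReal r := by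
  simp [epos]

lemma epos_neg_coe (r : ℝ) : epos (-((r : ℝ) : EReal)) = ENNReal.ofReal (-r) := by
  rw [← EReal.coe_neg]; simp [epos]

lemma coe_ennreal_toReal' {p : ℝ≥0∞} (h : p ≠ ⊤) : (p : EReal) = ((p.toReal : ℝ) : EReal) := by
  conv_lhs => rw [← ENNReal.ofReal_toReal h]
  rw [EReal.coe_ennreal_ofReal, max_eq_left ENNReal.toReal_nonneg]

lemma ennnorm_eq (r : ℝ) : (‖r‖₊ : ℝ≥0∞) = ENNReal.ofReal r + ENNReal.ofReal (-r) := by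
  change ‖r‖ₑ = _; rw [Real.enorm_eq_ofReal_abs]
  rcases le_total 0 r with h | h
  · rw [abs_of_nonneg h, ENNReal.ofReal_of_nonpos (neg_nonpos.2 h), add_zero]
  · rw [abs_of_nonpos h, ENNReal.ofReal_of_nonpos h, zero_add]

lemma lintegral_ofReal_lt_top {T : Type*} [MeasurableSpace T] {μ : Measure T} {f : T → ℝ}
    (hf : Integrable f μ) : (∫⁻ t, ENNReal.ofReal (f t) ∂μ) < ⊤ := by
  refine lt_of_le_of_lt (lintegral_mono fun t => ?_) hf.2
  exact le_self_add.trans_eq (ennnorm_eq (f t)).symm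

lemma eintegral_congr_ae {T : Type*} [MeasurableSpace T] {μ : Measure T} {f g : T → EReal}
    (h : f =ᵐ[μ] g) : eintegral μ f = eintegral μ g := by
  have h1 : (∫⁻ t, epos (f t) ∂μ) = ∫⁻ t, epos (g t) ∂μ :=
    lintegral_congr_ae (h.mono fun t ht => by dsimp only; rw [ht])
  have h2 : (∫⁻ t, epos (-f t) ∂μ) = ∫⁻ t, epos (-g t) ∂μ :=
    lintegral_congr_ae (h.mono fun t ht => by dsimp only; rw [ht])
  unfold eintegral; rw [h1, h2]

lemma eintegral_coe {T : Type*} [MeasurableSpace T] {μ : Measure T} {f : T → ℝ}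
    (hf : Integrable f μ) :
    eintegral μ (fun t => ((f t : ℝ) : EReal)) = ((∫ t, f t ∂μ : ℝ) : EReal) := by
  have hPfin := lintegral_ofReal_lt_top hf
  have hNfin := lintegral_ofReal_lt_top hf.neg
  simp only [Pi.neg_apply] at hNfin
  unfold eintegral
  simp only [epos_coe, epos_neg_coe]
  rw [if_neg hPfin.ne, integral_eq_lintegral_pos_part_sub_lintegral_neg_part hf,
    EReal.coe_sub, coe_ennreal_toReal' hPfin.ne, coe_ennreal_toReal' hNfin.ne]

lemma eintegral_cases {T : Type*} [MeasurableSpace T] {μ : Measure T} {h g : T → ℝ}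
    (hm : AEMeasurable h μ) (hg : Integrable g μ) (hle : ∀ᵐ t ∂μ, g t ≤ h t) :
    eintegral μ (fun t => ((h t : ℝ) : EReal)) = ⊤ ∨
      (Integrable h μ ∧
        eintegral μ (fun t => ((h t : ℝ) : EReal)) = ((∫ t, h t ∂μ : ℝ) : EReal)) := by
  by_cases hP : (∫⁻ t, ENNReal.ofReal (h t) ∂μ) = ⊤
  · left; unfold eintegral; simp only [epos_coe]; rw [if_pos hP]
  · right
    have hN : (∫⁻ t, ENNReal.ofReal (-h t) ∂μ) < ⊤ := by
      refine lt_of_le_of_lt (lintegral_mono_ae (hle.mono fun t ht => ?_))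
        (lintegral_ofReal_lt_top hg.neg)
      exact ENNReal.ofReal_le_ofReal (by simpa using ht)
    have hint : Integrable h μ := by
      refine ⟨hm.aestronglyMeasurable, ?_⟩
      have heq : (∫⁻ t, (‖h t‖₊ : ℝ≥0∞) ∂μ) =
          (∫⁻ t, ENNReal.ofReal (h t) ∂μ) + ∫⁻ t, ENNReal.ofReal (-h t) ∂μ := by
        rw [show (fun t => ((‖h t‖₊ : ℝ≥0∞))) = fun t =>
          ENNReal.ofReal (h t) + ENNReal.ofReal (-h t) from funext fun t => ennnorm_eq _]
        exact lintegral_add_left' hm.ennreal_ofReal _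
      have : HasFiniteIntegral h μ := by
        rw [HasFiniteIntegral]; change ∫⁻ t, (‖h t‖₊ : ℝ≥0∞) ∂μ < ⊤; rw [heq]
        exact ENNReal.add_lt_top.2 ⟨lt_top_iff_ne_top.2 hP, hN⟩
      exact this
    exact ⟨hint, eintegral_coe hint⟩

lemma entropy_tangent {u v : ℝ} (hu : 0 ≤ u) (hv : 0 < v) :
    u * Real.log v + u - v ≤ u * Real.log u := by
  rcases eq_or_lt_of_le hu with h | h
  · simp [← h]; linarith
  · have hlog := Real.log_le_sub_one_of_pos (div_pos hv h)
    rw [Real.log_div hv.ne' h.ne'] at hlog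
    have h2 := mul_le_mul_of_nonneg_left hlog h.le
    rw [mul_sub, mul_sub, mul_div_cancel₀ _ h.ne', mul_one] at h2
    linarith

lemma entropy_eq {u v : ℝ} (hu : 0 ≤ u) (hv : 0 < v)
    (heq : u * Real.log u = u * Real.log v + u - v) : u = v := by
  by_contra hne
  rcases eq_or_lt_of_le hu with h | h
  · rw [← h] at heq; simp at heq; linarith
  · have hne' : v / u ≠ 1 := by
      intro hc
      exact hne ((div_eq_one_iff_eq h.ne').1 hc).symm
    have hlog := Real.log_lt_sub_one_of_pos (div_pos hv h) hne'
    rw [Real.log_div hv.ne' h.ne'] at hlog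
    have h2 := mul_lt_mul_of_pos_left hlog h
    rw [mul_sub, mul_sub, mul_div_cancel₀ _ h.ne', mul_one] at h2
    linarith

section
open Real

lemma integral_odd_gauss {b : ℝ} : ∫ x : ℝ, x * Real.exp (-b * x ^ 2) = 0 := by
  have h := integral_neg_eq_self (fun s : ℝ => s * Real.exp (-b * s ^ 2)) (volume : Measure ℝ)
  simp only [neg_sq] at h
  have h2 : ∫ x : ℝ, -x * Real.exp (-b * x ^ 2) = -∫ x : ℝ, x * Real.exp (-b * x ^ 2) := by
    rw [← integral_neg]; congr 1; funext x; ring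
  rw [h2] at h
  linarith

lemma integrable_sq_gauss {b : ℝ} (hb : 0 < b) :
    Integrable (fun x : ℝ => x ^ 2 * Real.exp (-b * x ^ 2)) := by
  have h2 : Integrable (fun x : ℝ => (2 / b) * Real.exp (-(b / 2) * x ^ 2)) :=
    (integrable_exp_neg_mul_sq (by linarith)).const_mul _
  refine h2.mono ?_ (ae_of_all _ fun x => ?_)
  · exact ((measurable_id.pow_const 2).mul
      ((measurable_id.pow_const 2).const_mul (-b)).exp).aestronglyMeasurable
  · rw [Real.norm_eq_abs, Real.norm_eq_abs, abs_of_nonneg (by positivity),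
      abs_of_nonneg (by positivity)]
    have hx : x ^ 2 ≤ (2 / b) * Real.exp ((b / 2) * x ^ 2) := by
      have h3 := Real.add_one_le_exp ((b / 2) * x ^ 2)
      have h4 : (b / 2) * x ^ 2 ≤ Real.exp ((b / 2) * x ^ 2) := by nlinarith
      calc x ^ 2 = (2 / b) * ((b / 2) * x ^ 2) := by field_simp
        _ ≤ (2 / b) * Real.exp ((b / 2) * x ^ 2) :=
            mul_le_mul_of_nonneg_left h4 (by positivity)
    calc x ^ 2 * Real.exp (-b * x ^ 2)
        ≤ (2 / b) * Real.exp ((b / 2) * x ^ 2) * Real.exp (-b * x ^ 2) :=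
          mul_le_mul_of_nonneg_right hx (Real.exp_nonneg _)
      _ = (2 / b) * Real.exp (-(b / 2) * x ^ 2) := by
          rw [mul_assoc, ← Real.exp_add]; ring_nf

lemma integral_sq_gauss {b : ℝ} (hb : 0 < b) :
    ∫ x : ℝ, x ^ 2 * Real.exp (-b * x ^ 2) = Real.sqrt (π / b) / (2 * b) := by
  have habs : ∫ x : ℝ, x ^ 2 * Real.exp (-b * x ^ 2)
      = ∫ x : ℝ, |x| ^ 2 * Real.exp (-b * |x| ^ 2) := by
    congr 1; funext x; rw [sq_abs]
  rw [habs, integral_comp_abs (f := fun y => y ^ 2 * Real.exp (-b * y ^ 2))]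
  have hIoi : ∫ x in Ioi (0 : ℝ), x ^ 2 * Real.exp (-b * x ^ 2)
      = ∫ x in Ioi (0 : ℝ), x ^ (2 : ℝ) * Real.exp (-b * x ^ (2 : ℝ)) := by
    refine setIntegral_congr_fun measurableSet_Ioi fun x hx => ?_
    rw [← Real.rpow_natCast x 2]; norm_num
  rw [hIoi, integral_rpow_mul_exp_neg_mul_rpow (by norm_num) (by norm_num) hb]
  have hG : Real.Gamma ((2 + 1) / 2) = Real.sqrt π / 2 := by
    rw [show ((2 + 1) / 2 : ℝ) = 1 / 2 + 1 by norm_num,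
      Real.Gamma_add_one (by norm_num), Real.Gamma_one_half_eq]
    ring
  rw [hG, show (-(2 + 1) / 2 : ℝ) = -(3 / 2) by norm_num, Real.rpow_neg hb.le]
  have hb32 : (b : ℝ) ^ ((3 : ℝ) / 2) = b * Real.sqrt b := by
    rw [show (3 / 2 : ℝ) = 1 + 1 / 2 by norm_num, Real.rpow_add hb, Real.rpow_one,
      ← Real.sqrt_eq_rpow]
  have hsq : Real.sqrt (π / b) = Real.sqrt π / Real.sqrt b := Real.sqrt_div pi_pos.le b
  rw [hb32, hsq]
  have hsb : (0 : ℝ) < Real.sqrt b := Real.sqrt_pos.2 hb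
  field_simp

end

/-- The Gaussian moment problem (PG)₃: minimize `∫ x ln x` subject to `∫ x = b₁`, `∫ t x = b₂`,
`∫ t² x = b₃`. For `b₁, b₃ > 0` and `|b₂| < √(b₁b₃)`, the unique optimal solution is the Gaussian
`x̄(t) = (b₁²/√(2π(b₁b₃ - b₂²))) exp(-½ b₁²(t - b₂/b₁)²/(b₁b₃ - b₂²))` with optimal value
`b₁ ln(b₁²/√(2πe(b₁b₃ - b₂²)))`. (For `b = (1,0,σ²)` this is the standard Gaussian density
`(2πσ²)^{-1/2} e^{-t²/(2σ²)}` with value `-ln √(2πeσ²)`.) -/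
theorem stmt_19 (b₁ b₂ b₃ : ℝ) (hb₁ : 0 < b₁) (hb₃ : 0 < b₃)
    (hb₂ : |b₂| < Real.sqrt (b₁ * b₃))
    (xbar : ℝ → ℝ)
    (hxbar : xbar = fun t : ℝ =>
      b₁ ^ 2 / Real.sqrt (2 * Real.pi * (b₁ * b₃ - b₂ ^ 2)) *
        Real.exp (-(1 / 2) * b₁ ^ 2 * (t - b₂ / b₁) ^ 2 / (b₁ * b₃ - b₂ ^ 2)))
    (S : Set (ℝ → ℝ))
    (hS : S = {x : ℝ → ℝ | Measurable x ∧ (∀ᵐ t, 0 ≤ x t) ∧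
      Integrable x ∧ Integrable (fun t => t * x t) ∧ Integrable (fun t => t ^ 2 * x t) ∧
      (∫ t, x t) = b₁ ∧ (∫ t, t * x t) = b₂ ∧ (∫ t, t ^ 2 * x t) = b₃}) :
    xbar ∈ S ∧
      Phi volume phiBS xbar =
        ((b₁ * Real.log (b₁ ^ 2 / Real.sqrt (2 * Real.pi * Real.exp 1 * (b₁ * b₃ - b₂ ^ 2)))
          : ℝ) : EReal) ∧
      (∀ x ∈ S, Phi volume phiBS xbar ≤ Phi volume phiBS x) ∧
      (∀ x ∈ S, Phi volume phiBS x = Phi volume phiBS xbar → x =ᵐ[volume] xbar) := by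
  have hπ : (0 : ℝ) < Real.pi := Real.pi_pos
  have hD : 0 < b₁ * b₃ - b₂ ^ 2 := by
    have h1 : b₂ ^ 2 < b₁ * b₃ := by
      have h2 : |b₂| ^ 2 < Real.sqrt (b₁ * b₃) ^ 2 :=
        pow_lt_pow_left₀ hb₂ (abs_nonneg b₂) (by norm_num)
      rwa [sq_abs, Real.sq_sqrt (by positivity)] at h2
    linarith
  set D := b₁ * b₃ - b₂ ^ 2 with hDdef
  set m := b₂ / b₁ with hmdef
  set a := b₁ ^ 2 / (2 * D) with hadef
  set C := b₁ ^ 2 / Real.sqrt (2 * Real.pi * D) with hCdef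
  have ha : 0 < a := div_pos (pow_pos hb₁ 2) (by positivity)
  have hs2πD : 0 < Real.sqrt (2 * Real.pi * D) := Real.sqrt_pos.2 (by positivity)
  have hC : 0 < C := div_pos (pow_pos hb₁ 2) hs2πD
  -- the function in clean form
  have hxbf : xbar = fun t => C * Real.exp (-a * (t - m) ^ 2) := by
    rw [hxbar]; funext t
    congr 1
    rw [hadef]
    field_simp
  have hxpos : ∀ t, 0 < xbar t := fun t => by rw [hxbf]; positivity
  have hxnn : ∀ t, 0 ≤ xbar t := fun t => (hxpos t).le
  -- basic gaussian facts
  have hIg : Integrable (fun s : ℝ => Real.exp (-a * s ^ 2)) := integrable_exp_neg_mul_sq ha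
  have hIg1 : Integrable (fun s : ℝ => s * Real.exp (-a * s ^ 2)) :=
    integrable_mul_exp_neg_mul_sq ha
  have hIg2 : Integrable (fun s : ℝ => s ^ 2 * Real.exp (-a * s ^ 2)) := integrable_sq_gauss ha
  have hJ0 : ∫ s : ℝ, Real.exp (-a * s ^ 2) = Real.sqrt (Real.pi / a) := integral_gaussian a
  have hJ1 : ∫ s : ℝ, s * Real.exp (-a * s ^ 2) = 0 := integral_odd_gauss
  have hJ2 : ∫ s : ℝ, s ^ 2 * Real.exp (-a * s ^ 2) = Real.sqrt (Real.pi / a) / (2 * a) :=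
    integral_sq_gauss ha
  have hCG : C * Real.sqrt (Real.pi / a) = b₁ := by
    have h1 : Real.pi / a = 2 * Real.pi * D / b₁ ^ 2 := by
      rw [hadef]; field_simp
    rw [h1, Real.sqrt_div (by positivity) (b₁ ^ 2), Real.sqrt_sq hb₁.le, hCdef]
    field_simp
  -- integrability of moments of xbar
  have hIxbar : Integrable xbar := by
    rw [hxbf]; exact (hIg.const_mul C).comp_sub_right m
  have hF1 : Integrable (fun s : ℝ => (s + m) * (C * Real.exp (-a * s ^ 2))) := by
    have h := (hIg1.const_mul C).add (hIg.const_mul (m * C))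
    exact h.congr (ae_of_all _ fun s => by dsimp; ring)
  have hIxbar1 : Integrable (fun t => t * xbar t) := by
    rw [hxbf]
    have h := hF1.comp_sub_right m
    exact h.congr (ae_of_all _ fun t => by dsimp; rw [sub_add_cancel])
  have hF2 : Integrable (fun s : ℝ => (s + m) ^ 2 * (C * Real.exp (-a * s ^ 2))) := by
    have h := ((hIg2.const_mul C).add (hIg1.const_mul (2 * m * C))).add
      (hIg.const_mul (m ^ 2 * C))
    exact h.congr (ae_of_all _ fun s => by dsimp; ring)
  have hIxbar2 : Integrable (fun t => t ^ 2 * xbar t) := by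
    rw [hxbf]
    have h := hF2.comp_sub_right m
    exact h.congr (ae_of_all _ fun t => by dsimp; rw [sub_add_cancel])
  -- the three moments of xbar
  have hM0 : (∫ t, xbar t) = b₁ := by
    rw [hxbf, ← hCG, ← hJ0, ← integral_const_mul]
    exact integral_sub_right_eq_self (fun s => C * Real.exp (-a * s ^ 2)) m
  have hM1 : (∫ t, t * xbar t) = b₂ := by
    simp only [hxbf]
    have hL : (∫ t : ℝ, t * (C * Real.exp (-a * (t - m) ^ 2)))
        = ∫ s : ℝ, (s + m) * (C * Real.exp (-a * s ^ 2)) := by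
      rw [← integral_sub_right_eq_self (fun s => (s + m) * (C * Real.exp (-a * s ^ 2))) m]
      congr 1; funext t; rw [sub_add_cancel]
    have hsplit : (∫ s : ℝ, (s + m) * (C * Real.exp (-a * s ^ 2)))
        = C * (∫ s : ℝ, s * Real.exp (-a * s ^ 2))
          + (m * C) * ∫ s : ℝ, Real.exp (-a * s ^ 2) := by
      rw [← integral_const_mul, ← integral_const_mul,
        ← integral_add (hIg1.const_mul C) (hIg.const_mul (m * C))]
      congr 1; funext s; ring
    rw [hL, hsplit, hJ1, hJ0, mul_zero, zero_add, mul_assoc, hCG, hmdef]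
    field_simp
  have hM2c : (∫ t, (t - m) ^ 2 * xbar t) = b₁ / (2 * a) := by
    simp only [hxbf]
    have hL : (∫ t : ℝ, (t - m) ^ 2 * (C * Real.exp (-a * (t - m) ^ 2)))
        = ∫ s : ℝ, s ^ 2 * (C * Real.exp (-a * s ^ 2)) := by
      exact integral_sub_right_eq_self (fun s => s ^ 2 * (C * Real.exp (-a * s ^ 2))) m
    have hsplit : (∫ s : ℝ, s ^ 2 * (C * Real.exp (-a * s ^ 2)))
        = C * ∫ s : ℝ, s ^ 2 * Real.exp (-a * s ^ 2) := by
      rw [← integral_const_mul]; congr 1; funext s; ring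
    rw [hL, hsplit, hJ2, ← mul_div_assoc, hCG]
  have hM2 : (∫ t, t ^ 2 * xbar t) = b₃ := by
    have hexp : (fun t => t ^ 2 * xbar t)
        = fun t => ((t - m) ^ 2 * xbar t + (2 * m) * (t * xbar t)) - m ^ 2 * xbar t := by
      funext t; ring
    have hI' : Integrable (fun t => (t - m) ^ 2 * xbar t) := by
      rw [hxbf]
      have h := ((hIg2.const_mul C).congr
        (ae_of_all _ fun s : ℝ => by dsimp; ring :
          (fun s : ℝ => C * (s ^ 2 * Real.exp (-a * s ^ 2)))
            =ᵐ[volume] fun s : ℝ => s ^ 2 * (C * Real.exp (-a * s ^ 2)))).comp_sub_right m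
      exact h
    have hA : Integrable (fun t => (t - m) ^ 2 * xbar t + 2 * m * (t * xbar t)) :=
      hI'.add (hIxbar1.const_mul (2 * m))
    have hB : Integrable (fun t => m ^ 2 * xbar t) := hIxbar.const_mul _
    rw [hexp, integral_sub hA hB, integral_add hI' (hIxbar1.const_mul (2 * m)),
      integral_const_mul, integral_const_mul, hM2c, hM1, hM0]
    rw [hadef, hmdef, hDdef]
    field_simp
    ring
  -- log of xbar
  have hlog : ∀ t, Real.log (xbar t) = Real.log C - a * (t - m) ^ 2 := by
    intro t; rw [hxbf]; dsimp
    rw [Real.log_mul hC.ne' (Real.exp_ne_zero _), Real.log_exp]; ring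
  -- entropy integral of xbar
  have hent_int : Integrable (fun t => xbar t * Real.log (xbar t)) := by
    have hI' : Integrable (fun t => (t - m) ^ 2 * xbar t) := by
      rw [hxbf]
      exact ((hIg2.const_mul C).congr
        (ae_of_all _ fun s : ℝ => by dsimp; ring :
          (fun s : ℝ => C * (s ^ 2 * Real.exp (-a * s ^ 2)))
            =ᵐ[volume] fun s : ℝ => s ^ 2 * (C * Real.exp (-a * s ^ 2)))).comp_sub_right m
    have h := (hIxbar.const_mul (Real.log C)).sub (hI'.const_mul a)
    exact h.congr (ae_of_all _ fun t => by dsimp; rw [hlog t]; ring)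
  have hI'xbar : Integrable (fun t => (t - m) ^ 2 * xbar t) := by
    rw [hxbf]
    exact ((hIg2.const_mul C).congr
      (ae_of_all _ fun s : ℝ => by dsimp; ring :
        (fun s : ℝ => C * (s ^ 2 * Real.exp (-a * s ^ 2)))
          =ᵐ[volume] fun s : ℝ => s ^ 2 * (C * Real.exp (-a * s ^ 2)))).comp_sub_right m
  have hEval : (∫ t, xbar t * Real.log (xbar t)) = b₁ * Real.log C - b₁ / 2 := by
    have hexp : (fun t => xbar t * Real.log (xbar t))
        = fun t => Real.log C * xbar t - a * ((t - m) ^ 2 * xbar t) := by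
      funext t; rw [hlog t]; ring
    rw [hexp, integral_sub (hIxbar.const_mul _) (hI'xbar.const_mul a), integral_const_mul,
      integral_const_mul, hM0, hM2c]
    field_simp
  -- value identity
  have hVal : b₁ * Real.log (b₁ ^ 2 / Real.sqrt (2 * Real.pi * Real.exp 1 * D))
      = b₁ * Real.log C - b₁ / 2 := by
    have hlogC : Real.log C = Real.log (b₁ ^ 2) - Real.log (Real.sqrt (2 * Real.pi * D)) := by
      rw [hCdef, Real.log_div (pow_ne_zero 2 hb₁.ne') hs2πD.ne']
    have hlogE : Real.log (b₁ ^ 2 / Real.sqrt (2 * Real.pi * Real.exp 1 * D))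
        = Real.log (b₁ ^ 2) - Real.log (Real.sqrt (2 * Real.pi * D)) - 1 / 2 := by
      rw [show 2 * Real.pi * Real.exp 1 * D = (2 * Real.pi * D) * Real.exp 1 by ring,
        Real.sqrt_mul (by positivity) (Real.exp 1),
        Real.log_div (pow_ne_zero 2 hb₁.ne') (by positivity),
        Real.log_mul hs2πD.ne' (by positivity), Real.log_sqrt (Real.exp_pos 1).le,
        Real.log_exp]
      ring
    rw [hlogE, hlogC]; ring
  -- Phi of xbar
  have hPhiXbar : Phi volume phiBS xbar = ((b₁ * Real.log C - b₁ / 2 : ℝ) : EReal) := by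
    have hpt : (fun t => phiBS (xbar t))
        = fun t => ((xbar t * Real.log (xbar t) : ℝ) : EReal) := by
      funext t; simp only [phiBS]; rw [if_neg (not_lt.2 (hxnn t))]
    show eintegral volume (fun t => phiBS (xbar t)) = _
    rw [hpt, eintegral_coe hent_int, hEval]
  -- membership of xbar in S
  have hmem : xbar ∈ S := by
    rw [hS]
    refine ⟨?_, ae_of_all _ hxnn, hIxbar, hIxbar1, hIxbar2, hM0, hM1, hM2⟩
    rw [hxbf]
    exact measurable_const.mul
      (((measurable_id.sub_const m).pow_const 2).const_mul (-a)).exp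
  -- main optimality/uniqueness argument for any feasible x
  have key : ∀ x ∈ S, (Phi volume phiBS xbar ≤ Phi volume phiBS x) ∧
      (Phi volume phiBS x = Phi volume phiBS xbar → x =ᵐ[volume] xbar) := by
    intro x hx
    rw [hS] at hx
    obtain ⟨hmx, hxnn', hI0, hI1, hI2', hm0, hm1, hm2⟩ := hx
    set g : ℝ → ℝ := fun t => Real.log C * x t - a * (t ^ 2 * x t) + (2 * a * m) * (t * x t)
      - (a * m ^ 2) * x t + (x t - xbar t) with hgdef
    have hgint : Integrable g :=
      ((((hI0.const_mul (Real.log C)).sub (hI2'.const_mul a)).add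
        (hI1.const_mul (2 * a * m))).sub (hI0.const_mul (a * m ^ 2))).add (hI0.sub hIxbar)
    have hq1 : Integrable (fun t => Real.log C * x t - a * (t ^ 2 * x t)) :=
      (hI0.const_mul _).sub (hI2'.const_mul a)
    have hq2 : Integrable
        (fun t => Real.log C * x t - a * (t ^ 2 * x t) + (2 * a * m) * (t * x t)) :=
      hq1.add (hI1.const_mul _)
    have hq3 : Integrable (fun t => Real.log C * x t - a * (t ^ 2 * x t)
        + (2 * a * m) * (t * x t) - (a * m ^ 2) * x t) := hq2.sub (hI0.const_mul _)
    have hq4 : Integrable (fun t => x t - xbar t) := hI0.sub hIxbar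
    have hgval : (∫ t, g t) = b₁ * Real.log C - b₁ / 2 := by
      simp only [hgdef]
      rw [integral_add hq3 hq4, integral_sub hq2 (hI0.const_mul (a * m ^ 2)),
        integral_add hq1 (hI1.const_mul (2 * a * m)),
        integral_sub (hI0.const_mul (Real.log C)) (hI2'.const_mul a),
        integral_const_mul, integral_const_mul, integral_const_mul, integral_const_mul,
        integral_sub hI0 hIxbar, hm0, hm1, hm2, hM0]
      rw [hadef, hmdef, hDdef]
      have hD' : b₁ * b₃ - b₂ ^ 2 ≠ 0 := hD.ne'
      field_simp
      ring
    have hgle : ∀ t, 0 ≤ x t → g t = x t * Real.log (xbar t) + x t - xbar t := by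
      intro t _
      rw [hlog t, hgdef]; ring
    have hge : ∀ᵐ t, g t ≤ x t * Real.log (x t) := by
      refine hxnn'.mono fun t ht => ?_
      rw [hgle t ht]
      exact entropy_tangent ht (hxpos t)
    have hmeas_h : AEMeasurable (fun t => x t * Real.log (x t)) (volume : Measure ℝ) :=
      (hmx.mul (Real.measurable_log.comp hmx)).aemeasurable
    have hPhiX : Phi volume phiBS x
        = eintegral volume (fun t => ((x t * Real.log (x t) : ℝ) : EReal)) := by
      refine eintegral_congr_ae (hxnn'.mono fun t ht => ?_)
      simp only [phiBS]; rw [if_neg (not_lt.2 ht)]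
    rcases eintegral_cases hmeas_h hgint hge with hcase | ⟨hint, heq⟩
    · constructor
      · rw [hPhiX, hcase]; exact le_top
      · intro habs
        rw [hPhiX, hcase, hPhiXbar] at habs
        exact absurd habs.symm (EReal.coe_ne_top _)
    · have hmono : (∫ t, g t) ≤ ∫ t, x t * Real.log (x t) := integral_mono_ae hgint hint hge
      constructor
      · rw [hPhiX, heq, hPhiXbar, EReal.coe_le_coe_iff]
        rw [hgval] at hmono; exact hmono
      · intro habs
        rw [hPhiX, heq, hPhiXbar] at habs
        have hinteq : (∫ t, x t * Real.log (x t)) = b₁ * Real.log C - b₁ / 2 :=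
          EReal.coe_eq_coe_iff.1 habs
        have hzero : (∫ t, (x t * Real.log (x t) - g t)) = 0 := by
          rw [integral_sub hint hgint, hinteq, hgval, sub_self]
        have hnn : 0 ≤ᵐ[volume] fun t => x t * Real.log (x t) - g t :=
          hge.mono fun t ht => by simpa using ht
        have haez := (integral_eq_zero_iff_of_nonneg_ae hnn (hint.sub hgint)).1 hzero
        have haez' : ∀ᵐ t, x t * Real.log (x t) - g t = 0 := haez
        refine (haez'.and hxnn').mono fun t ⟨hteq, htnn⟩ => ?_
        have h1 : x t * Real.log (x t) = g t := by linarith [hteq]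
        rw [hgle t htnn] at h1
        exact entropy_eq htnn (hxpos t) (by linarith [h1])
  exact ⟨hmem, by rw [hPhiXbar, hVal], fun x hx => (key x hx).1, fun x hx => (key x hx).2⟩
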